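/- There exists a tiling system in dimension 2 that is aperiodic: it admits at least one valid tiling of the plane, but no valid tiling has any nonzero horizontal period and no valid tiling has any nonzero vertical period. -/

import Mathlib

/-- A tiling system in dimension 2: a finite set of tiles `T` together with a
finite family of forbidden patterns, each given by a finite neighborhood
`nbhd i ⊆ ℤ²` and a pattern `pat i : ℤ² → T`. -/
structure TilingSystem2 where
  T : Type
  fintypeT : Fintype T
  ι : Type
  fintypeι : Fintype ι
  nbhd : ι → Finset (ℤ × ℤ)
  pat : ι → ℤ × ℤ → T

/-- A tiling `c : ℤ² → T` is valid if no translate of a forbidden pattern appears in it. -/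
def TilingSystem2.IsValid (τ : TilingSystem2) (c : ℤ × ℤ → τ.T) : Prop :=
  ∀ v : ℤ × ℤ, ∀ i : τ.ι, ¬ (∀ u ∈ τ.nbhd i, c (v + u) = τ.pat i u)

/-- `q` is a horizontal period of `c`: `q > 0` and `c (x + q, y) = c (x, y)` for all `x, y`. -/
def TilingSystem2.IsHorizPeriod (τ : TilingSystem2) (c : ℤ × ℤ → τ.T) (q : ℕ) : Prop :=
  0 < q ∧ ∀ x y : ℤ, c (x + (q : ℤ), y) = c (x, y)

/-- `q` is the horizontal eigenperiod of `c`: the smallest horizontal period of `c`. -/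
def TilingSystem2.IsHorizEigenperiod (τ : TilingSystem2) (c : ℤ × ℤ → τ.T) (q : ℕ) : Prop :=
  τ.IsHorizPeriod c q ∧ ∀ q' : ℕ, τ.IsHorizPeriod c q' → q ≤ q'

/-- `L_h(τ)`: the set of horizontal eigenperiods of valid tilings of `τ`. -/
def TilingSystem2.Lh (τ : TilingSystem2) : Set ℕ :=
  { q | ∃ c : ℤ × ℤ → τ.T, τ.IsValid c ∧ τ.IsHorizEigenperiod c q }

/-- `q` is a vertical period of `c`: `q > 0` and `c (x, y + q) = c (x, y)` for all `x, y`. -/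
def TilingSystem2.IsVertPeriod (τ : TilingSystem2) (c : ℤ × ℤ → τ.T) (q : ℕ) : Prop :=
  0 < q ∧ ∀ x y : ℤ, c (x, y + (q : ℤ)) = c (x, y)

/-- `τ` is aperiodic: it admits a valid tiling, but no valid tiling has a nonzero
horizontal period and no valid tiling has a nonzero vertical period. -/
def TilingSystem2.Aperiodic (τ : TilingSystem2) : Prop :=
  (∃ c : ℤ × ℤ → τ.T, τ.IsValid c) ∧
    ∀ c : ℤ × ℤ → τ.T, τ.IsValid c →
      (¬ ∃ q : ℕ, τ.IsHorizPeriod c q) ∧ (¬ ∃ q : ℕ, τ.IsVertPeriod c q)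


namespace Kari

/-- Decoded carry numerators. -/
def num : Fin 5 → ℤ := ![-3, -1, 0, 1, 2]

structure Tile where
  mode : Bool
  top : Fin 3
  bot : Fin 3
  left : Fin 5
  right : Fin 5
deriving DecidableEq, Fintype

def topZ (t : Tile) : ℤ := (t.top : ℤ)
def botZ (t : Tile) : ℤ := (t.bot : ℤ)

/-- The local arithmetic soundness condition of a tile. -/
def Pok (t : Tile) : Prop :=
  if t.mode then
    1 ≤ topZ t ∧ 3 * botZ t = 2 * topZ t + num t.left - num t.right
  else
    1 ≤ botZ t ∧ 3 * botZ t = 6 * topZ t + num t.left - num t.right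

instance : DecidablePred Pok := fun t => by unfold Pok; infer_instance

def Hcomp (t t' : Tile) : Prop := t.mode = t'.mode ∧ t.right = t'.left
def Vcomp (t t' : Tile) : Prop := t.bot = t'.top

instance : ∀ t t', Decidable (Hcomp t t') := fun _ _ => by unfold Hcomp; infer_instance
instance : ∀ t t', Decidable (Vcomp t t') := fun _ _ => by unfold Vcomp; infer_instance

/-- a fixed bad tile -/
def t0 : Tile := ⟨false, 0, 0, 0, 0⟩

lemma not_Pok_t0 : ¬ Pok t0 := by decide

def τ : TilingSystem2 where
  T := Tile
  fintypeT := inferInstance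
  ι := Tile ⊕ (Tile × Tile) ⊕ (Tile × Tile)
  fintypeι := inferInstance
  nbhd
    | .inl _ => {(0, 0)}
    | .inr (.inl _) => {(0, 0), (1, 0)}
    | .inr (.inr _) => {(0, 0), (0, 1)}
  pat
    | .inl t => if Pok t then (fun _ => t0) else fun _ => t
    | .inr (.inl (t, t')) =>
        if Hcomp t t' then (fun _ => t0) else fun u => if u = (1, 0) then t' else t
    | .inr (.inr (t, t')) =>
        if Vcomp t t' then (fun _ => t0) else fun u => if u = (0, 1) then t' else t

/-- the "good configuration" predicate -/
def Good (c : ℤ × ℤ → Tile) : Prop :=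
  (∀ v, Pok (c v)) ∧ (∀ x y : ℤ, Hcomp (c (x, y)) (c (x + 1, y))) ∧
    (∀ x y : ℤ, Vcomp (c (x, y)) (c (x, y + 1)))

lemma valid_iff_good (c : ℤ × ℤ → Tile) : τ.IsValid c ↔ Good c := by
  constructor
  · intro hv
    refine ⟨fun v => ?_, fun x y => ?_, fun x y => ?_⟩
    · by_contra h
      apply hv v (.inl (c v))
      intro u hu
      simp only [τ, Finset.mem_singleton] at hu
      subst hu
      simp [τ, h, Prod.mk_add_mk]
      exact congrArg c (add_zero v)
    · by_contra h
      apply hv (x, y) (.inr (.inl (c (x, y), c (x + 1, y))))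
      intro u hu
      simp only [τ, Finset.mem_insert, Finset.mem_singleton] at hu
      rcases hu with rfl | rfl <;>
        simp [τ, h, Prod.mk_add_mk, Prod.ext_iff]
    · by_contra h
      apply hv (x, y) (.inr (.inr (c (x, y), c (x, y + 1))))
      intro u hu
      simp only [τ, Finset.mem_insert, Finset.mem_singleton] at hu
      rcases hu with rfl | rfl <;>
        simp [τ, h, Prod.mk_add_mk, Prod.ext_iff]
  · rintro ⟨hp, hh, hvv⟩ v i hocc
    obtain ⟨a, b⟩ := v
    match i with
    | .inl t =>
      by_cases h : Pok t
      · have := hocc (0, 0) (by simp [τ])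
        simp only [τ, h, if_pos] at this
        exact not_Pok_t0 (this ▸ hp ((a, b) + (0,0)))
      · have := hocc (0, 0) (by simp [τ])
        simp only [τ, h, if_neg, not_false_iff] at this
        exact h (this ▸ hp ((a, b) + (0,0)))
    | .inr (.inl (t, t')) =>
      by_cases h : Hcomp t t'
      · have := hocc (0, 0) (by simp [τ])
        simp only [τ, h, if_pos] at this
        exact not_Pok_t0 (this ▸ hp ((a, b) + (0,0)))
      · have h1 := hocc (0, 0) (by simp [τ])
        have h2 := hocc (1, 0) (by simp [τ])
        simp only [τ, h, if_neg, not_false_iff, if_pos] at h1 h2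
        have h2' : c (a + 1, b) = t' := by
          simpa [Prod.mk_add_mk] using h2
        have h1' : c (a, b) = t := by
          simpa [Prod.mk_add_mk] using h1
        exact h (h1' ▸ h2' ▸ hh a b)
    | .inr (.inr (t, t')) =>
      by_cases h : Vcomp t t'
      · have := hocc (0, 0) (by simp [τ])
        simp only [τ, h, if_pos] at this
        exact not_Pok_t0 (this ▸ hp ((a, b) + (0,0)))
      · have h1 := hocc (0, 0) (by simp [τ])
        have h2 := hocc (0, 1) (by simp [τ])
        simp only [τ, h, if_neg, not_false_iff, if_pos] at h1 h2
        have h2' : c (a, b + 1) = t' := by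
          simpa [Prod.mk_add_mk] using h2
        have h1' : c (a, b) = t := by
          simpa [Prod.mk_add_mk] using h1
        exact h (h1' ▸ h2' ▸ hvv a b)

end Kari

namespace Kari

lemma num_pos_iff : ∀ i : Fin 5, True := fun _ => trivial

section NoDoublyPeriodic

variable (c : ℤ × ℤ → Tile)

lemma row_mode (hh : ∀ x y : ℤ, Hcomp (c (x, y)) (c (x + 1, y))) :
    ∀ (x y : ℤ), (c (x, y)).mode = (c (0, y)).mode := by
  intro x y
  induction x using Int.induction_on with
  | zero => rfl
  | succ k ih => rw [← ih]; exact ((hh k y).1).symm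
  | pred k ih => rw [← ih]; have := (hh (-(k : ℤ) - 1) y).1; simpa using this

variable {c} (hg : Good c) {L p : ℕ} (hL : 0 < L) (hp : 0 < p)
  (hper : ∀ x y : ℤ, c (x + (L : ℤ), y) = c (x, y))
  (vper : ∀ x y : ℤ, c (x, y + (p : ℤ)) = c (x, y))

/-- row sums of top labels -/
noncomputable def S (c : ℤ × ℤ → Tile) (L : ℕ) (y : ℤ) : ℤ :=
  ∑ x ∈ Finset.range L, topZ (c ((x : ℤ), y))

include hg hL hper in
lemma row_step : ∀ y : ℤ,
    (3 * S c L (y + 1) = 2 * S c L y ∨ S c L (y + 1) = 2 * S c L y) ∧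
      0 < S c L (y + 1) := by
  obtain ⟨hpok, hh, hv⟩ := hg
  intro y
  -- bottom sums equal next row's top sums
  have hbt : ∀ x : ℕ, botZ (c ((x : ℤ), y)) = topZ (c ((x : ℤ), y + 1)) := by
    intro x
    have := hv (x : ℤ) y
    unfold Vcomp at this
    unfold botZ topZ
    rw [this]
  have hS1 : S c L (y + 1) = ∑ x ∈ Finset.range L, botZ (c ((x : ℤ), y)) := by
    unfold S
    exact Finset.sum_congr rfl fun x _ => (hbt x).symm
  -- carries telescope
  have hcar : ∀ x : ℕ, num ((c ((x : ℤ), y)).right) = num ((c (((x + 1 : ℕ) : ℤ), y)).left) := by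
    intro x
    have := (hh (x : ℤ) y).2
    push_cast
    rw [this]
  have hFL : num ((c (((L : ℕ) : ℤ), y)).left) = num ((c ((0 : ℤ), y)).left) := by
    have : c (((L : ℕ) : ℤ), y) = c ((0 : ℤ), y) := by
      have := hper 0 y
      simpa using this
    rw [this]
  cases hm : (c (0, y)).mode with
  | false =>
    -- multiplier 2 rows: 3 bot = 6 top + carry diff, bot ≥ 1
    have key : ∀ x : ℕ, 3 * botZ (c ((x : ℤ), y)) =
        6 * topZ (c ((x : ℤ), y)) +
          (num ((c ((x : ℤ), y)).left) - num ((c (((x + 1 : ℕ) : ℤ), y)).left)) ∧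
        1 ≤ botZ (c ((x : ℤ), y)) := by
      intro x
      have hpk := hpok ((x : ℤ), y)
      have hmx : (c ((x : ℤ), y)).mode = false := by rw [row_mode c hh, hm]
      unfold Pok at hpk
      rw [hmx] at hpk
      simp only [Bool.false_eq_true, if_false] at hpk
      refine ⟨?_, hpk.1⟩
      rw [← hcar x]
      linarith [hpk.2]
    have hsum : 3 * S c L (y + 1) = 6 * S c L y := by
      rw [hS1]
      rw [Finset.mul_sum]
      rw [Finset.sum_congr rfl fun x _ => (key x).1]
      rw [Finset.sum_add_distrib]
      have htel : ∑ x ∈ Finset.range L,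
          (num ((c ((x : ℤ), y)).left) - num ((c (((x + 1 : ℕ) : ℤ), y)).left)) =
          num ((c ((0 : ℤ), y)).left) - num ((c (((L : ℕ) : ℤ), y)).left) := by
        exact Finset.sum_range_sub' (fun x => num ((c ((x : ℤ), y)).left)) L
      rw [htel, hFL]
      unfold S
      rw [Finset.mul_sum]
      push_cast
      ring
    constructor
    · right; linarith
    · rw [hS1]
      calc (0 : ℤ) < L := by exact_mod_cast hL
        _ = ∑ _x ∈ Finset.range L, (1 : ℤ) := by simp
        _ ≤ _ := Finset.sum_le_sum fun x _ => (key x).2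
  | true =>
    have key : ∀ x : ℕ, 3 * botZ (c ((x : ℤ), y)) =
        2 * topZ (c ((x : ℤ), y)) +
          (num ((c ((x : ℤ), y)).left) - num ((c (((x + 1 : ℕ) : ℤ), y)).left)) ∧
        1 ≤ topZ (c ((x : ℤ), y)) := by
      intro x
      have hpk := hpok ((x : ℤ), y)
      have hmx : (c ((x : ℤ), y)).mode = true := by rw [row_mode c hh, hm]
      unfold Pok at hpk
      rw [hmx] at hpk
      simp only [if_true] at hpk
      refine ⟨?_, hpk.1⟩
      rw [← hcar x]
      linarith [hpk.2]
    have hsum : 3 * S c L (y + 1) = 2 * S c L y := by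
      rw [hS1]
      rw [Finset.mul_sum]
      rw [Finset.sum_congr rfl fun x _ => (key x).1]
      rw [Finset.sum_add_distrib]
      have htel : ∑ x ∈ Finset.range L,
          (num ((c ((x : ℤ), y)).left) - num ((c (((x + 1 : ℕ) : ℤ), y)).left)) =
          num ((c ((0 : ℤ), y)).left) - num ((c (((L : ℕ) : ℤ), y)).left) := by
        exact Finset.sum_range_sub' (fun x => num ((c ((x : ℤ), y)).left)) L
      rw [htel, hFL]
      unfold S
      rw [Finset.mul_sum]
      ring
    have hSpos : (L : ℤ) ≤ S c L y := by
      unfold S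
      calc (L : ℤ) = ∑ _x ∈ Finset.range L, (1 : ℤ) := by simp
        _ ≤ _ := Finset.sum_le_sum fun x _ => (key x).2
    constructor
    · left; exact hsum
    · nlinarith [hsum, hSpos, (show (0:ℤ) < L by exact_mod_cast hL)]

include hg hL hper in
lemma iter_step : ∀ k : ℕ, ∃ n : ℕ, 3 ^ n * S c L (k : ℤ) = 2 ^ k * S c L 0 := by
  intro k
  induction k with
  | zero => exact ⟨0, by simp⟩
  | succ k ih =>
    obtain ⟨n, hn⟩ := ih
    rcases (row_step hg hL hper (k : ℤ)).1 with h | h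
    · refine ⟨n + 1, ?_⟩
      push_cast
      push_cast at hn
      calc 3 ^ (n + 1) * S c L ((k : ℤ) + 1) = 3 ^ n * (3 * S c L ((k : ℤ) + 1)) := by ring
        _ = 3 ^ n * (2 * S c L (k : ℤ)) := by rw [h]
        _ = 2 * (3 ^ n * S c L (k : ℤ)) := by ring
        _ = 2 ^ (k + 1) * S c L 0 := by rw [hn]; ring
    · refine ⟨n, ?_⟩
      push_cast
      push_cast at hn
      calc 3 ^ n * S c L ((k : ℤ) + 1) = 3 ^ n * (2 * S c L (k : ℤ)) := by rw [h]
        _ = 2 * (3 ^ n * S c L (k : ℤ)) := by ring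
        _ = 2 ^ (k + 1) * S c L 0 := by rw [hn]; ring

include hg hL hp hper vper in
theorem no_doubly_periodic : False := by
  obtain ⟨n, hn⟩ := iter_step hg hL hper p
  have hSp : S c L ((p : ℕ) : ℤ) = S c L 0 := by
    unfold S
    refine Finset.sum_congr rfl fun x _ => ?_
    have := vper (x : ℤ) 0
    rw [show ((p : ℕ) : ℤ) = 0 + (p : ℤ) by ring, this]
  have hS0 : 0 < S c L 0 := by
    have := (row_step hg hL hper (-1)).2
    simpa using this
  rw [hSp] at hn
  have h32 : (3 : ℤ) ^ n = 2 ^ p := mul_right_cancel₀ (ne_of_gt hS0) hn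
  have h32' : (3 : ℕ) ^ n = 2 ^ p := by exact_mod_cast h32
  have h2 : 2 ∣ 3 ^ n := h32' ▸ dvd_pow_self 2 hp.ne'
  have := Nat.Prime.dvd_of_dvd_pow Nat.prime_two h2
  omega

end NoDoublyPeriodic

end Kari

namespace Kari

section Pigeonhole

variable {T : Type} [Finite T]

omit [Finite T] in
lemma ext_period (c : ℤ × ℤ → T) (L : ℕ)
    (hper : ∀ x y : ℤ, c (x + (L : ℤ), y) = c (x, y)) :
    ∀ (k x y : ℤ), c (x + k * (L : ℤ), y) = c (x, y) := by
  intro k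
  induction k using Int.induction_on with
  | zero => intro x y; simp
  | succ k ih =>
    intro x y
    have : x + ((k : ℤ) + 1) * (L : ℤ) = (x + k * L) + L := by ring
    rw [this, hper, ih]
  | pred k ih =>
    intro x y
    have h := hper (x + (-(k : ℤ) - 1) * (L : ℤ)) y
    have e : x + (-(k : ℤ) - 1) * (L : ℤ) + (L : ℤ) = x + (-(k : ℤ)) * L := by ring
    rw [e] at h
    rw [← h]
    exact ih x y

omit [Finite T] in
lemma row_ext (c : ℤ × ℤ → T) (L : ℕ) (hL : 0 < L)
    (hper : ∀ x y : ℤ, c (x + (L : ℤ), y) = c (x, y)) (y1 y2 : ℤ)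
    (h : ∀ i : Fin L, c ((i : ℤ), y1) = c ((i : ℤ), y2)) :
    ∀ x : ℤ, c (x, y1) = c (x, y2) := by
  have hL' : (0 : ℤ) < L := by exact_mod_cast hL
  intro x
  have hx : x = x % (L : ℤ) + (x / (L : ℤ)) * (L : ℤ) := by
    rw [mul_comm]
    exact (Int.emod_add_mul_ediv x (L : ℤ)).symm
  have h0 : 0 ≤ x % (L : ℤ) := Int.emod_nonneg x (ne_of_gt hL')
  have h1 : x % (L : ℤ) < L := Int.emod_lt_of_pos x hL'
  have hxt : ((x % (L : ℤ)).toNat : ℤ) = x % (L : ℤ) := Int.toNat_of_nonneg h0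
  have hlt : (x % (L : ℤ)).toNat < L := by omega
  have key := h ⟨(x % (L : ℤ)).toNat, hlt⟩
  simp only [hxt] at key
  have hx' : x % (L : ℤ) + (x / (L : ℤ)) * (L : ℤ) = x := hx.symm
  have e1 := ext_period c L hper (x / (L : ℤ)) (x % (L : ℤ)) y1
  have e2 := ext_period c L hper (x / (L : ℤ)) (x % (L : ℤ)) y2
  rw [hx'] at e1 e2
  rw [e1, e2, key]

lemma make_vert_periodic (H V : T → T → Prop) (P : T → Prop)
    (c : ℤ × ℤ → T) (hP : ∀ v, P (c v))
    (hH : ∀ x y : ℤ, H (c (x, y)) (c (x + 1, y)))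
    (hV : ∀ x y : ℤ, V (c (x, y)) (c (x, y + 1)))
    (L : ℕ) (hL : 0 < L)
    (hper : ∀ x y : ℤ, c (x + (L : ℤ), y) = c (x, y)) :
    ∃ (c' : ℤ × ℤ → T) (p : ℕ), 0 < p ∧ (∀ v, P (c' v)) ∧
      (∀ x y : ℤ, H (c' (x, y)) (c' (x + 1, y))) ∧
      (∀ x y : ℤ, V (c' (x, y)) (c' (x, y + 1))) ∧
      (∀ x y : ℤ, c' (x + (L : ℤ), y) = c' (x, y)) ∧
      (∀ x y : ℤ, c' (x, y + (p : ℤ)) = c' (x, y)) := by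
  -- pigeonhole on rows
  obtain ⟨a, b, hab, hfab⟩ :=
    Finite.exists_ne_map_eq_of_infinite (fun (k : ℕ) (i : Fin L) => c ((i : ℤ), (k : ℤ)))
  -- wlog a < b
  obtain ⟨y1, y2, hy12, hrow0⟩ : ∃ y1 y2 : ℕ, y1 < y2 ∧
      ∀ i : Fin L, c ((i : ℤ), (y1 : ℤ)) = c ((i : ℤ), (y2 : ℤ)) := by
    rcases Nat.lt_or_ge a b with h | h
    · exact ⟨a, b, h, fun i => congrFun hfab i⟩
    · have : b < a := by omega
      exact ⟨b, a, this, fun i => (congrFun hfab i).symm⟩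
  have hrow : ∀ x : ℤ, c (x, (y1 : ℤ)) = c (x, (y2 : ℤ)) :=
    row_ext c L hL hper _ _ hrow0
  set p : ℕ := y2 - y1 with hpdef
  have hp : 0 < p := by omega
  have hp' : (0 : ℤ) < p := by exact_mod_cast hp
  have hy2 : (y2 : ℤ) = (y1 : ℤ) + p := by push_cast [hpdef]; omega
  set e : ℤ → ℤ := fun y => (y1 : ℤ) + y % (p : ℤ) with hedef
  refine ⟨fun v => c (v.1, e v.2), p, hp, fun v => hP _, fun x y => hH _ _, ?_, ?_, ?_⟩
  · -- vertical compatibility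
    intro x y
    have h0 : 0 ≤ y % (p : ℤ) := Int.emod_nonneg y (ne_of_gt hp')
    have h1 : y % (p : ℤ) < p := Int.emod_lt_of_pos y hp'
    have hstep : (y + 1) % (p : ℤ) = (y % (p : ℤ) + 1) % (p : ℤ) := by
      rw [Int.add_emod, Int.add_emod (y % (p : ℤ)) 1, Int.emod_emod_of_dvd y dvd_rfl]
    by_cases hc : y % (p : ℤ) + 1 < p
    · have : (y + 1) % (p : ℤ) = y % (p : ℤ) + 1 := by
        rw [hstep, Int.emod_eq_of_lt (by omega) hc]
      show V (c (x, e y)) (c (x, e (y + 1)))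
      rw [hedef]
      simp only []
      rw [this]
      have : (y1 : ℤ) + (y % (p : ℤ) + 1) = ((y1 : ℤ) + y % (p : ℤ)) + 1 := by ring
      rw [this]
      exact hV _ _
    · have hceq : y % (p : ℤ) + 1 = p := by omega
      have : (y + 1) % (p : ℤ) = 0 := by
        rw [hstep, hceq, Int.emod_self]
      show V (c (x, e y)) (c (x, e (y + 1)))
      rw [hedef]
      simp only []
      rw [this, add_zero]
      have hkey : c (x, (y1 : ℤ)) = c (x, ((y1 : ℤ) + y % (p : ℤ)) + 1) := by
        rw [show ((y1 : ℤ) + y % (p : ℤ)) + 1 = (y1 : ℤ) + p by omega, ← hy2]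
        exact hrow x
      rw [hkey]
      exact hV _ _
  · intro x y
    exact hper x (e y)
  · intro x y
    show c (x, e (y + (p : ℤ))) = c (x, e y)
    have : (y + (p : ℤ)) % (p : ℤ) = y % (p : ℤ) := by
      conv_lhs => rw [show y + (p : ℤ) = y + (p : ℤ) * 1 by ring]
      exact Int.add_mul_emod_self_left ..
    rw [hedef]
    simp only []
    rw [this]

end Pigeonhole

end Kari

namespace Kari

section Existence

/-- exponent of 3 -/
noncomputable def tl (y : ℤ) : ℤ := Int.clog 3 ((2 : ℚ) ^ (y - 1))

/-- the sequence of reals (rationals) whose Beatty sequences form the rows -/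
noncomputable def al (y : ℤ) : ℚ := 2 ^ y / 3 ^ tl y

lemma two_zpow_pos (z : ℤ) : (0 : ℚ) < 2 ^ z := zpow_pos (by norm_num) z
lemma three_zpow_pos (z : ℤ) : (0 : ℚ) < 3 ^ z := zpow_pos (by norm_num) z

lemma two_zpow_pred (y : ℤ) : (2 : ℚ) ^ y = 2 * 2 ^ (y - 1) := by
  have h := zpow_add_one₀ (by norm_num : (2:ℚ) ≠ 0) (y - 1)
  rw [sub_add_cancel] at h
  rw [h]; ring

lemma three_zpow_pred (t : ℤ) : (3 : ℚ) ^ t = 3 * 3 ^ (t - 1) := by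
  have h := zpow_add_one₀ (by norm_num : (3:ℚ) ≠ 0) (t - 1)
  rw [sub_add_cancel] at h
  rw [h]; ring

lemma two_zpow_succ (y : ℤ) : (2 : ℚ) ^ (y + 1) = 2 * 2 ^ y := by
  rw [zpow_add_one₀ (by norm_num : (2:ℚ) ≠ 0)]; ring

lemma three_zpow_succ (t : ℤ) : (3 : ℚ) ^ (t + 1) = 3 * 3 ^ t := by
  rw [zpow_add_one₀ (by norm_num : (3:ℚ) ≠ 0)]; ring

lemma tl_le (y : ℤ) : (2 : ℚ) ^ (y - 1) ≤ 3 ^ tl y := by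
  have := Int.self_le_zpow_clog (b := 3) (by norm_num) ((2 : ℚ) ^ (y - 1))
  simpa [tl] using this

lemma tl_lt (y : ℤ) : (3 : ℚ) ^ (tl y - 1) < 2 ^ (y - 1) := by
  have := Int.zpow_pred_clog_lt_self (b := 3) (R := ℚ) (by norm_num)
    (two_zpow_pos (y - 1))
  simpa [tl] using this

lemma al_pos (y : ℤ) : 0 < al y := div_pos (two_zpow_pos y) (three_zpow_pos _)

lemma al_le_two (y : ℤ) : al y ≤ 2 := by
  unfold al
  rw [div_le_iff₀ (three_zpow_pos _)]
  have h := tl_le y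
  rw [two_zpow_pred y]
  nlinarith [two_zpow_pos (y - 1), three_zpow_pos (tl y)]

lemma al_gt (y : ℤ) : 2 / 3 < al y := by
  unfold al
  rw [div_lt_div_iff₀ (by norm_num) (three_zpow_pos _)]
  have h := tl_lt y
  rw [two_zpow_pred y, three_zpow_pred (tl y)]
  nlinarith [two_zpow_pos (y - 1), three_zpow_pos (tl y - 1)]

lemma tl_mono (y : ℤ) : tl y ≤ tl (y + 1) := by
  unfold tl
  apply Int.clog_mono_right (two_zpow_pos (y - 1))
  rw [show y + 1 - 1 = (y - 1) + 1 by ring, two_zpow_succ]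
  nlinarith [two_zpow_pos (y - 1)]

lemma tl_succ_le (y : ℤ) : tl (y + 1) ≤ tl y + 1 := by
  unfold tl
  rw [← Int.le_zpow_iff_clog_le (b := 3) (by norm_num) (two_zpow_pos (y + 1 - 1))]
  have hc : ((3 : ℕ) : ℚ) = 3 := by norm_num
  rw [hc, show y + 1 - 1 = (y - 1) + 1 by ring, two_zpow_succ, three_zpow_succ]
  have h := tl_le y
  unfold tl at h
  nlinarith [two_zpow_pos (y - 1)]

lemma al_step (y : ℤ) :
    (al y ≤ 1 ∧ al (y + 1) = 2 * al y) ∨ (1 < al y ∧ al (y + 1) = 2 / 3 * al y) := by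
  have hd : tl (y + 1) = tl y ∨ tl (y + 1) = tl y + 1 := by
    have := tl_mono y
    have := tl_succ_le y
    omega
  have h2 : (2 : ℚ) ^ (y + 1) = 2 * 2 ^ y := two_zpow_succ y
  rcases hd with hd | hd
  · -- ratio 2
    have hr : al (y + 1) = 2 * al y := by
      unfold al
      rw [hd, h2]
      ring
    have hle : al y ≤ 1 := by
      by_contra h
      push_neg at h
      have := al_le_two (y + 1)
      rw [hr] at this
      linarith
    exact Or.inl ⟨hle, hr⟩
  · -- ratio 2/3
    have hr : al (y + 1) = 2 / 3 * al y := by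
      unfold al
      rw [hd, h2]
      rw [three_zpow_succ (tl y)]
      field_simp
    have hgt : 1 < al y := by
      by_contra h
      push_neg at h
      have := al_gt (y + 1)
      rw [hr] at this
      linarith
    exact Or.inr ⟨hgt, hr⟩

/-- Beatty digit -/
noncomputable def dig (β : ℚ) (x : ℤ) : ℤ := ⌊((x : ℚ) + 1) * β⌋ - ⌊(x : ℚ) * β⌋

lemma dig_nonneg {β : ℚ} (h : 0 ≤ β) (x : ℤ) : 0 ≤ dig β x := by
  unfold dig
  have : (x : ℚ) * β ≤ ((x : ℚ) + 1) * β := by nlinarith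
  have := Int.floor_le_floor this
  omega

lemma dig_le_two {β : ℚ} (h : β ≤ 2) (x : ℤ) : dig β x ≤ 2 := by
  unfold dig
  have h1 : ((x : ℚ) + 1) * β ≤ (x : ℚ) * β + 2 := by nlinarith
  have h2 := Int.floor_le_floor h1
  rw [show ((x : ℚ) * β + 2) = (x : ℚ) * β + ((2 : ℤ) : ℚ) by push_cast; ring,
    Int.floor_add_intCast] at h2
  omega

lemma dig_le_one {β : ℚ} (h : β ≤ 1) (x : ℤ) : dig β x ≤ 1 := by
  unfold dig
  have h1 : ((x : ℚ) + 1) * β ≤ (x : ℚ) * β + 1 := by nlinarith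
  have h2 := Int.floor_le_floor h1
  rw [show ((x : ℚ) * β + 1) = (x : ℚ) * β + ((1 : ℤ) : ℚ) by push_cast; ring,
    Int.floor_add_intCast] at h2
  omega

lemma dig_ge_one {β : ℚ} (h : 1 ≤ β) (x : ℤ) : 1 ≤ dig β x := by
  unfold dig
  have h1 : (x : ℚ) * β + 1 ≤ ((x : ℚ) + 1) * β := by nlinarith
  have h2 := Int.floor_le_floor h1
  rw [show ((x : ℚ) * β + 1) = (x : ℚ) * β + ((1 : ℤ) : ℚ) by push_cast; ring,
    Int.floor_add_intCast] at h2
  omega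

/-- carry numerators -/
noncomputable def carryN (y x : ℤ) : ℤ :=
  if 1 < al y then 2 * ⌊(x : ℚ) * al y⌋ - 3 * ⌊(x : ℚ) * al (y + 1)⌋
  else 6 * ⌊(x : ℚ) * al y⌋ - 3 * ⌊(x : ℚ) * al (y + 1)⌋

lemma carryN_A {y : ℤ} (h : al y ≤ 1) (x : ℤ) :
    carryN y x = -3 ∨ carryN y x = 0 := by
  have hstep := al_step y
  rcases hstep with ⟨h1, hr⟩ | ⟨h1, _⟩
  swap
  · linarith
  unfold carryN
  rw [if_neg (by linarith), hr]
  have hfl := Int.floor_le ((x : ℚ) * al y)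
  have hfl2 := Int.lt_floor_add_one ((x : ℚ) * al y)
  have hg1 : 2 * ⌊(x : ℚ) * al y⌋ ≤ ⌊(x : ℚ) * (2 * al y)⌋ := by
    apply Int.le_floor.2
    push_cast
    nlinarith
  have hg2 : ⌊(x : ℚ) * (2 * al y)⌋ ≤ 2 * ⌊(x : ℚ) * al y⌋ + 1 := by
    have : ⌊(x : ℚ) * (2 * al y)⌋ < 2 * ⌊(x : ℚ) * al y⌋ + 2 := by
      apply Int.floor_lt.2
      push_cast
      nlinarith
    omega
  omega

lemma carryN_B {y : ℤ} (h : 1 < al y) (x : ℤ) :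
    -1 ≤ carryN y x ∧ carryN y x ≤ 2 := by
  have hstep := al_step y
  rcases hstep with ⟨h1, _⟩ | ⟨h1, hr⟩
  · linarith
  unfold carryN
  rw [if_pos h, hr]
  have hfl := Int.floor_le ((x : ℚ) * al y)
  have hfl2 := Int.lt_floor_add_one ((x : ℚ) * al y)
  have hfl3 := Int.floor_le ((x : ℚ) * (2 / 3 * al y))
  have hfl4 := Int.lt_floor_add_one ((x : ℚ) * (2 / 3 * al y))
  constructor
  · -- > -2
    have : (-2 : ℚ) < 2 * ⌊(x : ℚ) * al y⌋ - 3 * ⌊(x : ℚ) * (2 / 3 * al y)⌋ := by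
      push_cast
      nlinarith
    have : (-2 : ℤ) < 2 * ⌊(x : ℚ) * al y⌋ - 3 * ⌊(x : ℚ) * (2 / 3 * al y)⌋ := by
      exact_mod_cast this
    omega
  · have : (2 * ⌊(x : ℚ) * al y⌋ - 3 * ⌊(x : ℚ) * (2 / 3 * al y)⌋ : ℚ) < 3 := by
      push_cast
      nlinarith
    have : (2 * ⌊(x : ℚ) * al y⌋ - 3 * ⌊(x : ℚ) * (2 / 3 * al y)⌋ : ℤ) < 3 := by
      exact_mod_cast this
    omega

def enc3 (a : ℤ) : Fin 3 := if a ≤ 0 then 0 else if a = 1 then 1 else 2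

lemma enc3_val {a : ℤ} (h0 : 0 ≤ a) (h2 : a ≤ 2) : ((enc3 a : Fin 3) : ℤ) = a := by
  interval_cases a <;> rfl

def enc5 (n : ℤ) : Fin 5 :=
  if n = -3 then 0 else if n = -1 then 1 else if n = 0 then 2 else if n = 1 then 3 else 4

lemma num_enc5 {n : ℤ} (h : n = -3 ∨ (-1 ≤ n ∧ n ≤ 2)) : num (enc5 n) = n := by
  rcases h with rfl | ⟨h1, h2⟩
  · rfl
  · interval_cases n <;> rfl

/-- the valid configuration -/
noncomputable def bc : ℤ × ℤ → Tile := fun v =>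
  ⟨decide (1 < al v.2), enc3 (dig (al v.2) v.1), enc3 (dig (al (v.2 + 1)) v.1),
    enc5 (carryN v.2 v.1), enc5 (carryN v.2 (v.1 + 1))⟩

lemma bc_good : Good bc := by
  have htop : ∀ y x : ℤ, ((enc3 (dig (al y) x) : Fin 3) : ℤ) = dig (al y) x := fun y x =>
    enc3_val (dig_nonneg (le_of_lt (al_pos y)) x) (dig_le_two (al_le_two y) x)
  have hcar : ∀ y x : ℤ, num (enc5 (carryN y x)) = carryN y x := by
    intro y x
    by_cases h : 1 < al y
    · have := carryN_B h x
      exact num_enc5 (Or.inr this)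
    · push_neg at h
      rcases carryN_A h x with h' | h'
      · exact num_enc5 (Or.inl h')
      · exact num_enc5 (Or.inr (by omega))
  refine ⟨?_, ?_, ?_⟩
  · rintro ⟨x, y⟩
    unfold Pok bc
    simp only [topZ, botZ]
    by_cases h : 1 < al y
    · rw [if_pos (by simp [h])]
      rw [htop, htop, hcar, hcar]
      constructor
      · exact dig_ge_one (le_of_lt h) x
      · unfold carryN
        rw [if_pos h, if_pos h]
        unfold dig
        push_cast
        ring
    · rw [if_neg (by simp [h])]
      rw [htop, htop, hcar, hcar]
      push_neg at h
      constructor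
      · apply dig_ge_one _ x
        rcases al_step y with ⟨_, hr⟩ | ⟨h1, _⟩
        · rw [hr]
          have := al_gt y
          linarith
        · linarith
      · unfold carryN
        rw [if_neg (by push_neg; exact h), if_neg (by push_neg; exact h)]
        unfold dig
        push_cast
        ring
  · intro x y
    exact ⟨rfl, rfl⟩
  · intro x y
    rfl

end Existence

end Kari

namespace Kari

lemma kari_no_horiz (c : ℤ × ℤ → Tile) (hg : Good c) {q : ℕ} (hq : 0 < q)
    (hper : ∀ x y : ℤ, c (x + (q : ℤ), y) = c (x, y)) : False := by
  obtain ⟨hP, hH, hV⟩ := hg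
  obtain ⟨c', p, hp, hP', hH', hV', hper', vper'⟩ :=
    make_vert_periodic Hcomp Vcomp Pok c hP hH hV q hq hper
  exact no_doubly_periodic ⟨hP', hH', hV'⟩ hq hp hper' vper'

lemma kari_no_vert (c : ℤ × ℤ → Tile) (hg : Good c) {q : ℕ} (hq : 0 < q)
    (vper : ∀ x y : ℤ, c (x, y + (q : ℤ)) = c (x, y)) : False := by
  obtain ⟨hP, hH, hV⟩ := hg
  set d : ℤ × ℤ → Tile := fun v => c (v.2, v.1) with hd
  obtain ⟨d', p, hp, hP', hH', hV', hper', vper'⟩ :=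
    make_vert_periodic Vcomp Hcomp Pok d (fun v => hP _)
      (fun x y => hV y x) (fun x y => hH y x) q hq (fun x y => vper y x)
  set e : ℤ × ℤ → Tile := fun v => d' (v.2, v.1) with he
  have hge : Good e := ⟨fun v => hP' _, fun x y => hV' y x, fun x y => hH' y x⟩
  exact no_doubly_periodic hge hp hq (fun x y => vper' y x) (fun x y => hper' y x)

end Kari

/-- There exists an aperiodic tiling system in dimension 2. -/
theorem exists_aperiodic_tilingSystem : ∃ τ : TilingSystem2, τ.Aperiodic := by
  refine ⟨Kari.τ, ⟨Kari.bc, (Kari.valid_iff_good Kari.bc).2 Kari.bc_good⟩, ?_⟩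
  intro c hc
  have hg : Kari.Good c := (Kari.valid_iff_good c).1 hc
  constructor
  · rintro ⟨q, hq0, hq⟩
    exact Kari.kari_no_horiz c hg hq0 hq
  · rintro ⟨q, hq0, hq⟩
    exact Kari.kari_no_vert c hg hq0 hq
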